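/- Fix pairwise disjoint finite observed index sets V_1,…,V_m with union V, a finite latent index set H partitioned as H = L ∪ I_1 ∪ ⋯ ∪ I_m with S_e = L ∪ I_e, a mixing support pattern D_VH ⊆ V × H such that (v,k) ∉ D_VH whenever v ∈ V_e and k ∉ S_e, and a latent edge pattern D_HH ⊆ H × H that is acyclic (as a directed graph on H, edges k → h for (h,k) ∈ D_HH) and contains no pairs between L and H∖L and no pairs between I_e and I_f for e ≠ f. Let Im(φ) = { G(I−A)^{-1} : G ∈ ℝ^{V×H} with G_{v,k} = 0 for (v,k) ∉ D_VH, A ∈ ℝ^{H×H} with A_{h,k} = 0 for (h,k) ∉ D_HH }. Let B ∈ Im(φ) be rank-faithful, meaning that for every Y ⊆ V and every W ⊆ L, rank(B_{Y,W}) ≥ rank(B'_{Y,W}) for all B' ∈ Im(φ), and assume that no row of the submatrix B_{V,L} is the zero row. Then for any two distinct v, w ∈ V: rank(B_{{v,w},L}) = 1 if and only if there exists k ∈ L such that { j ∈ L : (v,j) ∈ D_VH } = {k} and { j ∈ L : (w,j) ∈ D_VH } = {k}, i.e. v and w are both partial pure children of the same shared node k. -/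

import Mathlib

/-- The image of the parametrization map `φ : (G, A) ↦ G (1 - A)⁻¹`, where `G` is supported
on the mixing pattern `DVH` and `A` on the latent edge pattern `DHH`. -/
def Imphi {V H : Type} [Fintype H] [DecidableEq H]
    (DVH : V → H → Prop) (DHH : H → H → Prop) : Set (Matrix V H ℝ) :=
  { B | ∃ (G : Matrix V H ℝ) (A : Matrix H H ℝ),
      (∀ v k, ¬ DVH v k → G v k = 0) ∧
      (∀ h k, ¬ DHH h k → A h k = 0) ∧
      B = G * (1 - A)⁻¹ }

open Matrix

lemma myrank_submatrix_le {m n m' n' : Type} [Fintype m] [Fintype n] [Fintype m'] [Fintype n']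
    (f : m' → m) (e : n' ≃ n) (A : Matrix m n ℝ) : (A.submatrix f e).rank ≤ A.rank := by
  rw [Matrix.rank, Matrix.rank, mulVecLin_submatrix, LinearMap.range_comp, LinearMap.range_comp,
    show LinearMap.funLeft ℝ ℝ e.symm = LinearEquiv.funCongrLeft ℝ ℝ e.symm from rfl,
    LinearEquiv.range, Submodule.map_top]
  exact Submodule.finrank_map_le _ _

lemma myrank_reindex {m n m' n' : Type} [Fintype m] [Fintype n] [Fintype m'] [Fintype n']
    (e₁ : m ≃ m') (e₂ : n ≃ n') (A : Matrix m n ℝ) :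
    (Matrix.reindex e₁ e₂ A).rank = A.rank := by
  rw [Matrix.rank, Matrix.rank, mulVecLin_reindex, LinearMap.range_comp, LinearMap.range_comp,
    LinearEquiv.range, Submodule.map_top, LinearEquiv.finrank_map_eq]

lemma myrank_submatrix {m n m' n' : Type} [Fintype m] [Fintype n] [Fintype m'] [Fintype n']
    (A : Matrix m n ℝ) (e₁ : m' ≃ m) (e₂ : n' ≃ n) :
    (A.submatrix e₁ e₂).rank = A.rank := by
  simpa only [Matrix.reindex_apply, Equiv.symm_symm] using myrank_reindex e₁.symm e₂.symm A

lemma myrank_submatrix_le' {m n m' n' : Type} [Fintype m] [Fintype n] [Fintype m'] [Fintype n']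
    (f : m' → m) (g : n' → n) (A : Matrix m n ℝ) : (A.submatrix f g).rank ≤ A.rank := by
  calc (A.submatrix f g).rank
      = ((A.submatrix id g).submatrix f (Equiv.refl n')).rank := rfl
    _ ≤ (A.submatrix id g).rank := myrank_submatrix_le f (Equiv.refl n') _
    _ = ((A.submatrix id g)ᵀ).rank := (Matrix.rank_transpose _).symm
    _ = (Aᵀ.submatrix g (Equiv.refl m)).rank := by congr 1
    _ ≤ Aᵀ.rank := myrank_submatrix_le g (Equiv.refl m) _
    _ = A.rank := Matrix.rank_transpose _

lemma one_le_rank {m n : Type} [Fintype m] [Fintype n]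
    (A : Matrix m n ℝ) (i : m) (j : n) (h : A i j ≠ 0) : 1 ≤ A.rank := by
  have h1 : (A.submatrix (fun _ : Fin 1 => i) (fun _ : Fin 1 => j)).rank = 1 := by
    have he : A.submatrix (fun _ : Fin 1 => i) (fun _ : Fin 1 => j) = !![A i j] := by
      ext a b; fin_cases a; fin_cases b; rfl
    rw [he, Matrix.rank_of_isUnit]
    · simp
    · rw [Matrix.isUnit_iff_isUnit_det, Matrix.det_fin_one_of, isUnit_iff_ne_zero]
      exact h
  exact h1 ▸ myrank_submatrix_le' _ _ A

lemma two_le_rank {m n : Type} [Fintype m] [Fintype n]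
    (A : Matrix m n ℝ) (i1 i2 : m) (j1 j2 : n)
    (h : A i1 j1 * A i2 j2 - A i1 j2 * A i2 j1 ≠ 0) : 2 ≤ A.rank := by
  have h1 : (A.submatrix ![i1, i2] ![j1, j2]).rank = 2 := by
    have he : A.submatrix ![i1, i2] ![j1, j2] = !![A i1 j1, A i1 j2; A i2 j1, A i2 j2] := by
      ext a b; fin_cases a <;> fin_cases b <;> rfl
    rw [he, Matrix.rank_of_isUnit]
    · simp
    · rw [Matrix.isUnit_iff_isUnit_det, Matrix.det_fin_two_of, isUnit_iff_ne_zero]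
      exact h
  exact h1 ▸ myrank_submatrix_le' _ _ A

lemma rank_vecMulVec_le {m n : Type} [Fintype m] [Fintype n] (c : m → ℝ) (r : n → ℝ) :
    (Matrix.vecMulVec c r).rank ≤ 1 := by
  rw [Matrix.vecMulVec_eq (Fin 1)]
  refine le_trans (Matrix.rank_mul_le_left _ _) ?_
  exact le_of_le_of_eq (Matrix.rank_le_card_width _) (by simp)

lemma lem_nilp {H : Type} [Fintype H] [DecidableEq H] (DHH : H → H → Prop)
    (hacyclic : ∀ h, ¬ Relation.TransGen (fun k h' => DHH h' k) h h)
    (A : Matrix H H ℝ) (hA : ∀ h k, ¬ DHH h k → A h k = 0) :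
    A ^ (Fintype.card H + 1) = 0 := by
  classical
  set f : H → ℕ := fun h => {k | Relation.TransGen DHH h k}.ncard with hf
  have hstep : ∀ h k, DHH h k → f k < f h := by
    intro h k hhk
    apply Set.ncard_lt_ncard ?_ (Set.toFinite _)
    constructor
    · intro j hj
      exact Relation.TransGen.head hhk hj
    · intro hsub
      have hk1 : k ∈ {j | Relation.TransGen DHH h j} := Relation.TransGen.single hhk
      have hk2 : Relation.TransGen DHH k k := hsub hk1
      exact hacyclic k (Relation.transGen_swap.mpr hk2)
  have hbound : ∀ h, f h ≤ Fintype.card H := by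
    intro h
    have := Set.ncard_le_ncard (Set.subset_univ {k | Relation.TransGen DHH h k})
      (Set.toFinite _)
    simpa [Set.ncard_univ] using this
  have key : ∀ n (h k : H), ((A ^ n) h k ≠ 0) → f k + n ≤ f h := by
    intro n
    induction n with
    | zero =>
      intro h k hne
      rw [pow_zero] at hne
      rcases eq_or_ne h k with rfl | hhk
      · simp
      · exact absurd (Matrix.one_apply_ne hhk) hne
    | succ n ih =>
      intro h k hne
      rw [pow_succ, Matrix.mul_apply] at hne
      obtain ⟨j, -, hj⟩ := Finset.exists_ne_zero_of_sum_ne_zero hne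
      have h1 := left_ne_zero_of_mul hj
      have h2 := right_ne_zero_of_mul hj
      have hD : DHH j k := by by_contra hc; exact h2 (hA j k hc)
      have hs := hstep j k hD
      have hi := ih h j h1
      omega
  ext h k
  simp only [Matrix.zero_apply]
  by_contra hne
  have h1 := key (Fintype.card H + 1) h k hne
  have h2 := hbound h
  omega

lemma lem_inv_one_sub {H : Type} [Fintype H] [DecidableEq H] (A : Matrix H H ℝ) {N : ℕ}
    (hN : A ^ N = 0) : (1 - A)⁻¹ = ∑ i ∈ Finset.range N, A ^ i := by
  apply Matrix.inv_eq_left_inv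
  have h : (∑ i ∈ Finset.range N, A ^ i) * (1 - A) = 1 - A ^ N := by
    rw [← neg_sub A (1 : Matrix H H ℝ), mul_neg, geom_sum_mul, neg_sub]
  rw [h, hN, sub_zero]

/-- **Rank-1 characterization of partial pure children (Lemma 4.1).**
Observed indices `V` are assigned to domains by `dom`, latent indices `H` to blocks by
`blk` (`none` = shared block `L`, `some e` = domain-specific block `I_e`).  For a
rank-faithful `B ∈ Im(φ)` whose shared columns have no zero row, two distinct observed
rows restricted to the shared columns have rank exactly `1` iff both are partial pure
children of one and the same shared latent node. -/
theorem stmt2 {V H : Type} [Fintype V] [Fintype H] [DecidableEq V] [DecidableEq H]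
    (m : ℕ) (dom : V → Fin m) (blk : H → Option (Fin m))
    (DVH : V → H → Prop) (DHH : H → H → Prop)
    -- mixing support respects the multi-domain structure
    (hDVH : ∀ v k, DVH v k → blk k = none ∨ blk k = some (dom v))
    -- the latent edge pattern is acyclic (edges k → h for pairs (h,k) ∈ DHH)
    (hacyclic : ∀ h, ¬ Relation.TransGen (fun k h' => DHH h' k) h h)
    -- no latent edges between the shared block and domain-specific blocks, nor between
    -- different domain-specific blocks
    (hDHH : ∀ h k, DHH h k → blk h = blk k)
    (B : Matrix V H ℝ) (hB : B ∈ Imphi DVH DHH)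
    -- rank faithfulness: B attains the maximal rank on every (Y, W ⊆ L) submatrix
    (hfaithful : ∀ (Y : Finset V) (W : Finset H), (∀ k ∈ W, blk k = none) →
      ∀ B' ∈ Imphi DVH DHH,
        (B'.submatrix (fun y : Y => (y : V)) (fun w : W => (w : H))).rank
          ≤ (B.submatrix (fun y : Y => (y : V)) (fun w : W => (w : H))).rank)
    -- no zero row in B_{V,L}
    (hnozero : ∀ v : V, ∃ k, blk k = none ∧ B v k ≠ 0) :
    ∀ v w : V, v ≠ w →
      ((Matrix.of ![fun k : {k : H // blk k = none} => B v k,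
          fun k : {k : H // blk k = none} => B w k]).rank = 1 ↔
        ∃ k, blk k = none ∧
          (∀ j, blk j = none → (DVH v j ↔ j = k)) ∧
          (∀ j, blk j = none → (DVH w j ↔ j = k))) := by
  obtain ⟨G, A, hG, hA, hBeq⟩ := hB
  have hApow : A ^ (Fintype.card H + 1) = 0 := lem_nilp DHH hacyclic A hA
  set N := Fintype.card H + 1 with hNdef
  set M : Matrix H H ℝ := ∑ i ∈ Finset.range N, A ^ i with hMdef
  have hinv : (1 - A)⁻¹ = M := lem_inv_one_sub A hApow
  have hpowblk : ∀ (n : ℕ) (j l : H), blk j ≠ blk l → (A ^ n) j l = 0 := by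
    intro n
    induction n with
    | zero =>
      intro j l hjl
      rw [pow_zero]
      exact Matrix.one_apply_ne (fun h => hjl (by rw [h]))
    | succ n ih =>
      intro j l hjl
      rw [pow_succ, Matrix.mul_apply]
      apply Finset.sum_eq_zero
      intro p _
      rcases eq_or_ne (blk j) (blk p) with he | he
      · have hz : A p l = 0 := by
          by_contra hc
          have hD : DHH p l := by by_contra hc2; exact hc (hA p l hc2)
          exact hjl (he.trans (hDHH p l hD))
        rw [hz, mul_zero]
      · rw [ih j p he, zero_mul]
  have hMblk : ∀ j l : H, blk j ≠ blk l → M j l = 0 := by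
    intro j l hjl
    have hsum : M j l = ∑ i ∈ Finset.range N, (A ^ i) j l := by
      simp [hMdef, Matrix.sum_apply]
    rw [hsum]
    exact Finset.sum_eq_zero fun i _ => hpowblk i j l hjl
  have hBentry : ∀ (x : V) (l : H), B x l = ∑ j : H, G x j * M j l := by
    intro x l
    rw [hBeq, hinv, Matrix.mul_apply]
  have hrow : ∀ (x : V) (k : H), blk k = none →
      (∀ j, blk j = none → (DVH x j ↔ j = k)) →
      ∀ l : H, blk l = none → B x l = G x k * M k l := by
    intro x k hk hpure l hl
    rw [hBentry x l, Finset.sum_eq_single k]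
    · intro j _ hjk
      rcases eq_or_ne (blk j) none with hj | hj
      · have hnd : ¬ DVH x j := fun hd => hjk ((hpure j hj).1 hd)
        rw [hG x j hnd, zero_mul]
      · rw [hMblk j l (by rw [hl]; exact hj), mul_zero]
    · intro hk'
      exact absurd (Finset.mem_univ k) hk'
  have hpar : ∀ x : V, ∃ k, blk k = none ∧ DVH x k := by
    intro x
    by_contra hc
    push_neg at hc
    obtain ⟨l, hl, hBl⟩ := hnozero x
    apply hBl
    rw [hBentry x l]
    apply Finset.sum_eq_zero
    intro j _
    rcases eq_or_ne (blk j) none with hj | hj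
    · rw [hG x j (hc j hj), zero_mul]
    · rw [hMblk j l (by rw [hl]; exact hj), mul_zero]
  intro v w hvw
  constructor
  · -- rank one implies pure children of a common node
    intro hrank1
    by_contra hnot
    obtain ⟨k1, hk1, hv1⟩ := hpar v
    obtain ⟨k2, hk2, hw2⟩ := hpar w
    have hab : ∃ a b, blk a = none ∧ blk b = none ∧ DVH v a ∧ DVH w b ∧ a ≠ b := by
      rcases eq_or_ne k1 k2 with rfl | hne
      · by_cases hPv : ∀ j, blk j = none → (DVH v j ↔ j = k1)
        · have hPw : ¬ ∀ j, blk j = none → (DVH w j ↔ j = k1) :=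
            fun hPw => hnot ⟨k1, hk1, hPv, hPw⟩
          push_neg at hPw
          obtain ⟨j, hj, hjiff⟩ := hPw
          rcases hjiff with ⟨hd, hjk⟩ | ⟨hd, rfl⟩
          · exact ⟨k1, j, hk1, hj, hv1, hd, fun h => hjk h.symm⟩
          · exact absurd hw2 hd
        · push_neg at hPv
          obtain ⟨j, hj, hjiff⟩ := hPv
          rcases hjiff with ⟨hd, hjk⟩ | ⟨hd, rfl⟩
          · exact ⟨j, k1, hj, hk1, hd, hw2, hjk⟩
          · exact absurd hv1 hd
      · exact ⟨k1, k2, hk1, hk2, hv1, hw2, hne⟩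
    obtain ⟨a, b, ha, hb, hva, hwb, hne⟩ := hab
    classical
    set G' : Matrix V H ℝ :=
      Matrix.of (fun x j => if x = v ∧ j = a then (1:ℝ) else if x = w ∧ j = b then 1 else 0)
      with hG'def
    have hG'mem : G' ∈ Imphi DVH DHH := by
      refine ⟨G', 0, ?_, fun h k _ => rfl, ?_⟩
      · intro x j hnd
        simp only [hG'def, Matrix.of_apply]
        split_ifs with h1 h2
        · exact absurd (show DVH x j by rw [h1.1, h1.2]; exact hva) hnd
        · exact absurd (show DVH x j by rw [h2.1, h2.2]; exact hwb) hnd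
        · rfl
      · rw [sub_zero, show ((1 : Matrix H H ℝ))⁻¹ = 1 from Matrix.inv_eq_left_inv (by simp),
          Matrix.mul_one]
    set Y : Finset V := {v, w} with hY
    set W : Finset H := Finset.univ.filter (fun k => blk k = none) with hW
    have hWmem : ∀ k ∈ W, blk k = none := by
      intro k hk; simpa [hW] using hk
    have hle := hfaithful Y W hWmem G' hG'mem
    have hvY : v ∈ Y := by simp [hY]
    have hwY : w ∈ Y := by simp [hY]
    have haW : a ∈ W := by simp [hW, ha]
    have hbW : b ∈ W := by simp [hW, hb]
    have h2 : 2 ≤ (G'.submatrix (fun y : Y => (y : V)) (fun x : W => (x : H))).rank := by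
      apply two_le_rank _ ⟨v, hvY⟩ ⟨w, hwY⟩ ⟨a, haW⟩ ⟨b, hbW⟩
      have e11 : G' v a = 1 := by simp [hG'def]
      have e22 : G' w b = 1 := by
        simp [hG'def, (Ne.symm hvw : w ≠ v)]
      have e12 : G' v b = 0 := by
        simp [hG'def, (Ne.symm hne : b ≠ a), hvw]
      have e21 : G' w a = 0 := by
        simp [hG'def, (Ne.symm hvw : w ≠ v), hne]
      simp only [Matrix.submatrix_apply]
      rw [e11, e22, e12, e21]
      norm_num
    have h2B : 2 ≤ (B.submatrix (fun y : Y => (y : V)) (fun x : W => (x : H))).rank :=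
      le_trans h2 hle
    have hBsub : (B.submatrix (fun y : Y => (y : V)) (fun x : W => (x : H)))
        = (Matrix.of ![fun k : {k : H // blk k = none} => B v k,
            fun k : {k : H // blk k = none} => B w k]).submatrix
          (fun y : {x // x ∈ Y} => if (y : V) = v then (0 : Fin 2) else 1)
          (fun x : {x // x ∈ W} => ⟨x.1, hWmem _ x.2⟩) := by
      ext y x
      by_cases hy : (y : V) = v
      · simp [Matrix.submatrix_apply, hy]
      · have hyw : (y : V) = w := by
          rcases Finset.mem_insert.mp y.2 with h | h
          · exact absurd h hy
          · exact Finset.mem_singleton.mp h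
        simp [Matrix.submatrix_apply, hy, hyw, (Ne.symm hvw : w ≠ v)]
    have h2T : 2 ≤ (Matrix.of ![fun k : {k : H // blk k = none} => B v k,
        fun k : {k : H // blk k = none} => B w k]).rank := by
      refine le_trans h2B ?_
      rw [hBsub]
      exact myrank_submatrix_le' _ _ _
    omega
  · rintro ⟨k, hk, hpv, hpw⟩
    have hTvec : (Matrix.of ![fun l : {l : H // blk l = none} => B v l,
          fun l : {l : H // blk l = none} => B w l])
        = Matrix.vecMulVec ![G v k, G w k] (fun l : {l : H // blk l = none} => M k l) := by
      ext i j
      fin_cases i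
      · simpa [Matrix.vecMulVec_apply] using hrow v k hk hpv j.val j.property
      · simpa [Matrix.vecMulVec_apply] using hrow w k hk hpw j.val j.property
    apply le_antisymm
    · rw [hTvec]
      exact _root_.rank_vecMulVec_le _ _
    · obtain ⟨l, hl, hBl⟩ := hnozero v
      refine one_le_rank _ 0 ⟨l, hl⟩ ?_
      simpa using hBl
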